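/- Any preordered space that has a thermodynamic representation is conditionally connected: if x ≼ z and y ≼ z then x and y are comparable. -/
import Mathlib


/-- A preorder with a thermodynamic representation is conditionally connected. -/
theorem thermo_representation_conditionally_connected {X : Type*} (le : X → X → Prop)
    (hrefl : ∀ x, le x x) (htrans : ∀ x y z, le x y → le y z → le x z)
    (ι : Type*) (g : ι → X → ℝ) (s : X → ℝ)
    (hrep : ∀ x y, le x y ↔ (∀ i, g i x = g i y) ∧ s x ≤ s y) :
    ∀ x y z, le x z → le y z → le x y ∨ le y x := by
  intro x y z hxz hyz
  obtain ⟨hg1, hs1⟩ := (hrep x z).mp hxz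
  obtain ⟨hg2, hs2⟩ := (hrep y z).mp hyz
  have hg : ∀ i, g i x = g i y := fun i => (hg1 i).trans (hg2 i).symm
  rcases le_total (s x) (s y) with h | h
  · exact Or.inl ((hrep x y).mpr ⟨hg, h⟩)
  · exact Or.inr ((hrep y x).mpr ⟨fun i => (hg i).symm, h⟩)
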